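/- Let K be a field, V, W vector spaces over K, and R ⊆ V ⊗ V, S ⊆ W ⊗ W subspaces. Let P := TensorAlgebra K (V × W) / J, where J is the two-sided ideal generated by the images of R under v⊗v' ↦ ι(v,0)·ι(v',0) and of S under w⊗w' ↦ ι(0,w)·ι(0,w'). Let i_A : TensorAlgebra K V / (R) → P and i_B : TensorAlgebra K W / (S) → P be the algebra homomorphisms induced by v ↦ (v,0) and w ↦ (0,w) respectively. Then (P, i_A, i_B) is a coproduct in the category of K-algebras: for every K-algebra C and K-algebra homomorphisms f : TensorAlgebra K V / (R) → C and g : TensorAlgebra K W / (S) → C, there exists a unique K-algebra homomorphism h : P → C with h ∘ i_A = f and h ∘ i_B = g. -/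

import Mathlib

open TensorProduct

/-- The linear map `V ⊗ V → T(V)` sending `v ⊗ w` to `ι v * ι w`. -/
noncomputable def quadMap (K V : Type*) [Field K] [AddCommGroup V] [Module K V] :
    V ⊗[K] V →ₗ[K] TensorAlgebra K V :=
  TensorProduct.lift
    ((LinearMap.mul K (TensorAlgebra K V) ∘ₗ TensorAlgebra.ι K).compl₂ (TensorAlgebra.ι K))

/-- The relation whose `RingQuot` is the quadratic algebra `T(V)/(R)`. -/
def quadRel {K V : Type*} [Field K] [AddCommGroup V] [Module K V]
    (R : Submodule K (V ⊗[K] V)) (x y : TensorAlgebra K V) : Prop :=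
  ∃ r ∈ R, x = quadMap K V r ∧ y = 0

/-- The quadratic algebra `T(V)/(R)`. -/
abbrev QuadAlgebraTV {K V : Type*} [Field K] [AddCommGroup V] [Module K V]
    (R : Submodule K (V ⊗[K] V)) : Type _ :=
  RingQuot (quadRel R)

variable {K V W : Type*} [Field K] [AddCommGroup V] [Module K V] [AddCommGroup W] [Module K W]

/-- The relation on `T(V × W)` whose `RingQuot` is the quotient of `T(V × W)` by the
two-sided ideal `J` generated by the images of `R` under `v ⊗ v' ↦ ι(v,0) * ι(v',0)`
and of `S` under `w ⊗ w' ↦ ι(0,w) * ι(0,w')`. -/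
def coprodRel (R : Submodule K (V ⊗[K] V)) (S : Submodule K (W ⊗[K] W))
    (x y : TensorAlgebra K (V × W)) : Prop :=
  (∃ r ∈ R, x = quadMap K (V × W)
      (TensorProduct.map (LinearMap.inl K V W) (LinearMap.inl K V W) r) ∧ y = 0)
  ∨ (∃ s ∈ S, x = quadMap K (V × W)
      (TensorProduct.map (LinearMap.inr K V W) (LinearMap.inr K V W) s) ∧ y = 0)

/-- `P = T(V × W)/J` together with the maps induced by `v ↦ (v,0)` and
`w ↦ (0,w)` is a coproduct of the quadratic algebras `TV/(R)` and `TW/(S)` in the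
category of `K`-algebras. -/
theorem quadraticAlgebra_coproduct (R : Submodule K (V ⊗[K] V))
    (S : Submodule K (W ⊗[K] W))
    (iA : QuadAlgebraTV R →ₐ[K] RingQuot (coprodRel R S))
    (iB : QuadAlgebraTV S →ₐ[K] RingQuot (coprodRel R S))
    (hiA : ∀ v : V, iA (RingQuot.mkAlgHom K (quadRel R) (TensorAlgebra.ι K v))
      = RingQuot.mkAlgHom K (coprodRel R S) (TensorAlgebra.ι K ((v, 0) : V × W)))
    (hiB : ∀ w : W, iB (RingQuot.mkAlgHom K (quadRel S) (TensorAlgebra.ι K w))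
      = RingQuot.mkAlgHom K (coprodRel R S) (TensorAlgebra.ι K ((0, w) : V × W))) :
    ∀ (C : Type*) [Ring C] [Algebra K C]
      (f : QuadAlgebraTV R →ₐ[K] C) (g : QuadAlgebraTV S →ₐ[K] C),
      ∃! h : RingQuot (coprodRel R S) →ₐ[K] C, h.comp iA = f ∧ h.comp iB = g := by
  intro C _ _ f g
  -- the linear map (v, w) ↦ f(mk ι v) + g(mk ι w)
  set L : V × W →ₗ[K] C :=
    (f.toLinearMap ∘ₗ (RingQuot.mkAlgHom K (quadRel R)).toLinearMap ∘ₗ TensorAlgebra.ι K ∘ₗ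
      LinearMap.fst K V W) +
    (g.toLinearMap ∘ₗ (RingQuot.mkAlgHom K (quadRel S)).toLinearMap ∘ₗ TensorAlgebra.ι K ∘ₗ
      LinearMap.snd K V W) with hL
  set φ : TensorAlgebra K (V × W) →ₐ[K] C := TensorAlgebra.lift K L with hφ
  have hLapp : ∀ v w, φ (TensorAlgebra.ι K ((v, w) : V × W)) =
      f (RingQuot.mkAlgHom K (quadRel R) (TensorAlgebra.ι K v)) +
      g (RingQuot.mkAlgHom K (quadRel S) (TensorAlgebra.ι K w)) := by
    intro v w
    simp [hφ, hL]
  have hLv : ∀ v : V, φ (TensorAlgebra.ι K ((v, 0) : V × W)) =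
      f (RingQuot.mkAlgHom K (quadRel R) (TensorAlgebra.ι K v)) := by
    intro v; rw [hLapp]; simp
  have hLw : ∀ w : W, φ (TensorAlgebra.ι K ((0, w) : V × W)) =
      g (RingQuot.mkAlgHom K (quadRel S) (TensorAlgebra.ι K w)) := by
    intro w; rw [hLapp]; simp
  -- φ kills the relations
  have hR : (φ.toLinearMap ∘ₗ quadMap K (V × W) ∘ₗ
      TensorProduct.map (LinearMap.inl K V W) (LinearMap.inl K V W)) =
      (f.toLinearMap ∘ₗ (RingQuot.mkAlgHom K (quadRel R)).toLinearMap ∘ₗ quadMap K V) := by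
    apply TensorProduct.ext'
    intro v v'
    simp only [LinearMap.comp_apply, TensorProduct.map_tmul, quadMap, TensorProduct.lift.tmul,
      LinearMap.compl₂_apply, LinearMap.mul_apply', LinearMap.inl_apply,
      AlgHom.toLinearMap_apply, map_mul]
    rw [hLv, hLv]
  have hS : (φ.toLinearMap ∘ₗ quadMap K (V × W) ∘ₗ
      TensorProduct.map (LinearMap.inr K V W) (LinearMap.inr K V W)) =
      (g.toLinearMap ∘ₗ (RingQuot.mkAlgHom K (quadRel S)).toLinearMap ∘ₗ quadMap K W) := by
    apply TensorProduct.ext'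
    intro w w'
    simp only [LinearMap.comp_apply, TensorProduct.map_tmul, quadMap, TensorProduct.lift.tmul,
      LinearMap.compl₂_apply, LinearMap.mul_apply', LinearMap.inr_apply,
      AlgHom.toLinearMap_apply, map_mul]
    rw [hLw, hLw]
  have hker : ∀ ⦃x y⦄, coprodRel R S x y → φ x = φ y := by
    rintro x y (⟨r, hr, rfl, rfl⟩ | ⟨s, hs, rfl, rfl⟩)
    · have := congrArg (fun m => m r) hR
      simp only [LinearMap.comp_apply, AlgHom.toLinearMap_apply] at this
      rw [this]
      have h0 : RingQuot.mkAlgHom K (quadRel R) (quadMap K V r) =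
          RingQuot.mkAlgHom K (quadRel R) 0 :=
        RingQuot.mkAlgHom_rel K ⟨r, hr, rfl, rfl⟩
      simp [h0]
    · have := congrArg (fun m => m s) hS
      simp only [LinearMap.comp_apply, AlgHom.toLinearMap_apply] at this
      rw [this]
      have h0 : RingQuot.mkAlgHom K (quadRel S) (quadMap K W s) =
          RingQuot.mkAlgHom K (quadRel S) 0 :=
        RingQuot.mkAlgHom_rel K ⟨s, hs, rfl, rfl⟩
      simp [h0]
  refine ⟨RingQuot.liftAlgHom K ⟨φ, hker⟩, ⟨?_, ?_⟩, ?_⟩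
  · -- h ∘ iA = f
    have : ((RingQuot.liftAlgHom K ⟨φ, hker⟩).comp iA).comp
        (RingQuot.mkAlgHom K (quadRel R)) = f.comp (RingQuot.mkAlgHom K (quadRel R)) := by
      apply TensorAlgebra.hom_ext
      ext v
      simp only [LinearMap.coe_comp, Function.comp_apply, AlgHom.toLinearMap_apply,
        AlgHom.comp_apply]
      rw [hiA v, RingQuot.liftAlgHom_mkAlgHom_apply, hLv]
    exact RingQuot.ringQuot_ext' K _ _ this ▸ rfl
  · have : ((RingQuot.liftAlgHom K ⟨φ, hker⟩).comp iB).comp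
        (RingQuot.mkAlgHom K (quadRel S)) = g.comp (RingQuot.mkAlgHom K (quadRel S)) := by
      apply TensorAlgebra.hom_ext
      ext w
      simp only [LinearMap.coe_comp, Function.comp_apply, AlgHom.toLinearMap_apply,
        AlgHom.comp_apply]
      rw [hiB w, RingQuot.liftAlgHom_mkAlgHom_apply, hLw]
    exact RingQuot.ringQuot_ext' K _ _ this ▸ rfl
  · rintro h' ⟨hA, hB⟩
    apply RingQuot.ringQuot_ext' K
    apply TensorAlgebra.hom_ext
    apply LinearMap.ext
    rintro ⟨v, w⟩
    have hsplit : TensorAlgebra.ι K ((v, w) : V × W) =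
        TensorAlgebra.ι K ((v, 0) : V × W) + TensorAlgebra.ι K ((0, w) : V × W) := by
      rw [← map_add]; norm_num
    simp only [LinearMap.coe_comp, Function.comp_apply, AlgHom.toLinearMap_apply,
      AlgHom.comp_apply, hsplit, map_add]
    rw [RingQuot.liftAlgHom_mkAlgHom_apply, RingQuot.liftAlgHom_mkAlgHom_apply,
      ← hiA v, ← hiB w, hLv, hLw]
    have : h' (iA (RingQuot.mkAlgHom K (quadRel R) (TensorAlgebra.ι K v))) =
        f (RingQuot.mkAlgHom K (quadRel R) (TensorAlgebra.ι K v)) := by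
      rw [← hA]; rfl
    have h2 : h' (iB (RingQuot.mkAlgHom K (quadRel S) (TensorAlgebra.ι K w))) =
        g (RingQuot.mkAlgHom K (quadRel S) (TensorAlgebra.ι K w)) := by
      rw [← hB]; rfl
    rw [this, h2]
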